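/- Let (X_1, ..., X_N) be an N-tuple of matrices in ℝ^{2×2} in T_N configuration, with A_{ij} = det(X_i - X_j). Then there exist λ_1, ..., λ_N > 0 and μ > 1 such that A^μ λ = 0, where A^μ is the N×N matrix with (A^μ)_{ij} = A_{ij} for i < j, (A^μ)_{ij} = μ A_{ij} for i > j, and zero diagonal. -/

import Mathlib

/-- An ordered `N`-tuple of `2×2` real matrices is a `T_N` configuration. -/
def IsTNConfig (N : ℕ) (X : Fin N → Matrix (Fin 2) (Fin 2) ℝ) : Prop :=
  (∀ i j, i ≠ j → 1 < (X i - X j).rank) ∧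
  ∃ (P : Matrix (Fin 2) (Fin 2) ℝ) (C : Fin N → Matrix (Fin 2) (Fin 2) ℝ) (κ : Fin N → ℝ),
    (∀ i, (C i).rank = 1) ∧ (∑ i, C i = 0) ∧ (∀ i, 1 < κ i) ∧
    ∀ i, X i = P + (∑ j ∈ Finset.univ.filter fun j : Fin N => (j : ℕ) < (i : ℕ), C j) + κ i • C i

lemma det_affine (M C : Matrix (Fin 2) (Fin 2) ℝ) (hC : C.det = 0) (t : ℝ) :
    (M + t • C).det = (1 - t) * M.det + t * (M + C).det := by
  simp only [Matrix.det_fin_two, Matrix.add_apply, Matrix.smul_apply, smul_eq_mul] at *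
  linear_combination (t ^ 2 - t) * hC

lemma rank_one_det (C : Matrix (Fin 2) (Fin 2) ℝ) (h : C.rank = 1) : C.det = 0 := by
  by_contra hd
  have : IsUnit C := (Matrix.isUnit_iff_isUnit_det C).2 (isUnit_iff_ne_zero.2 hd)
  have := Matrix.rank_of_isUnit C this
  simp [this] at h

lemma filter_succ_eq (n : ℕ) (p : Fin (n + 1)) :
    (Finset.univ.filter fun k : Fin (n + 1) => (k : ℕ) < (p : ℕ) + 1) =
      insert p (Finset.univ.filter fun k : Fin (n + 1) => (k : ℕ) < (p : ℕ)) := by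
  ext k
  simp [Fin.ext_iff]
  omega

theorem stmt13 (N : ℕ) (X : Fin N → Matrix (Fin 2) (Fin 2) ℝ) (hX : IsTNConfig N X) :
    ∃ μ : ℝ, 1 < μ ∧ ∃ lam : Fin N → ℝ, (∀ i, 0 < lam i) ∧
      ∀ i : Fin N, ∑ j : Fin N, (if (i : ℕ) < (j : ℕ) then (X i - X j).det
        else if (j : ℕ) < (i : ℕ) then μ * (X i - X j).det else 0) * lam j = 0 := by
  obtain ⟨-, P, C, κ, hC1, hCsum, hκ, hXeq⟩ := hX
  match N with
  | 0 =>
      exact ⟨2, by norm_num, fun _ => 1, fun i => i.elim0, fun i => i.elim0⟩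
  | n + 1 =>
  -- basic positivity facts
  have hκ0 : ∀ k, (0 : ℝ) < κ k := fun k => lt_trans one_pos (hκ k)
  have hκ1 : ∀ k, (0 : ℝ) < κ k - 1 := fun k => by have := hκ k; linarith
  have hdetC : ∀ k, (C k).det = 0 := fun k => rank_one_det _ (hC1 k)
  -- the corner points
  set Q : Fin (n + 1) → Matrix (Fin 2) (Fin 2) ℝ :=
    fun i => P + ∑ j ∈ Finset.univ.filter fun j : Fin (n + 1) => (j : ℕ) < (i : ℕ), C j with hQ
  have hXQ : ∀ i, X i = Q i + κ i • C i := fun i => hXeq i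
  have hlastadd : (Fin.last n) + 1 = 0 := by
    apply Fin.ext; simp [Fin.add_def]
  have hQsucc : ∀ i : Fin (n + 1), Q (i + 1) = Q i + C i := by
    intro i
    rcases lt_or_eq_of_le (Nat.lt_succ_iff.mp i.isLt) with h | h
    · have hv : ((i + 1 : Fin (n + 1)) : ℕ) = (i : ℕ) + 1 :=
        Fin.val_add_one_of_lt (by rwa [Fin.lt_iff_val_lt_val, Fin.val_last])
      simp only [hQ, hv]
      rw [filter_succ_eq, Finset.sum_insert (by simp)]
      abel
    · have hi : i = Fin.last n := Fin.ext (by simpa using h)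
      have h0 : i + 1 = 0 := by rw [hi, hlastadd]
      have hins : (Finset.univ : Finset (Fin (n + 1))) =
          insert i (Finset.univ.filter fun k : Fin (n + 1) => (k : ℕ) < (i : ℕ)) := by
        ext k
        have := k.isLt
        simp [Fin.ext_iff]
        omega
      have hsum : (∑ j ∈ Finset.univ.filter (fun j : Fin (n + 1) => (j : ℕ) < (i : ℕ)), C j)
          + C i = 0 := by
        rw [← hCsum]
        conv_rhs => rw [hins]
        rw [Finset.sum_insert (by simp)]
        abel
      simp only [hQ, h0]
      rw [show (Finset.univ.filter fun j : Fin (n + 1) => (j : ℕ) < ((0 : Fin (n+1)) : ℕ)) =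
        (∅ : Finset (Fin (n + 1))) from by simp]
      rw [Finset.sum_empty, add_assoc, hsum, add_zero]
  -- the auxiliary determinants
  set g : Fin (n + 1) → Fin (n + 1) → ℝ := fun i j => (Q j - X i).det with hg
  have hgii : ∀ i, g i i = 0 := by
    intro i
    have h1 : Q i - X i = -(κ i • C i) := by rw [hXQ i]; abel
    show (Q i - X i).det = 0
    rw [h1, Matrix.det_neg, Matrix.det_smul, hdetC]
    simp
  have hgsucc : ∀ i, g i (i + 1) = 0 := by
    intro i
    have h1 : Q (i + 1) - X i = (1 - κ i) • C i := by
      rw [hQsucc i, hXQ i, sub_smul, one_smul]; abel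
    show (Q (i + 1) - X i).det = 0
    rw [h1, Matrix.det_smul, hdetC, mul_zero]
  have hkey : ∀ i j, (X i - X j).det = (1 - κ j) * g i j + κ j * g i (j + 1) := by
    intro i j
    have h1 : (X i - X j).det = (X j - X i).det := by
      rw [show X i - X j = -(X j - X i) from (neg_sub _ _).symm, Matrix.det_neg]
      simp
    have h2 : X j - X i = (Q j - X i) + κ j • C j := by rw [hXQ j]; abel
    have h3 : (Q j - X i) + C j = Q (j + 1) - X i := by rw [hQsucc j]; abel
    rw [h1, h2, det_affine _ _ (hdetC j), h3]
  -- the weights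
  set lam : Fin (n + 1) → ℝ := fun j =>
    (κ j - 1)⁻¹ * ∏ k ∈ Finset.univ.filter fun k : Fin (n + 1) => (k : ℕ) < (j : ℕ),
      (κ k / (κ k - 1)) with hlam
  have hlampos : ∀ j, 0 < lam j := by
    intro j
    apply mul_pos (inv_pos.2 (hκ1 j))
    exact Finset.prod_pos fun k _ => div_pos (hκ0 k) (hκ1 k)
  set μ : ℝ := ∏ k : Fin (n + 1), (κ k / (κ k - 1)) with hμ
  have hμ1 : 1 < μ := by
    have h2 : ∏ _k : Fin (n + 1), (1 : ℝ) < ∏ k : Fin (n + 1), (κ k / (κ k - 1)) :=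
      Finset.prod_lt_prod_of_nonempty (by simp)
        (fun k _ => by rw [lt_div_iff₀ (hκ1 k)]; nlinarith [hκ k]) Finset.univ_nonempty
    rw [hμ]
    simpa using h2
  -- the recursion for lam
  have hrec : ∀ p : Fin (n + 1), (p : ℕ) + 1 < n + 1 →
      lam (p + 1) * (κ (p + 1) - 1) = lam p * κ p := by
    intro p hp
    have hv : ((p + 1 : Fin (n + 1)) : ℕ) = (p : ℕ) + 1 :=
      Fin.val_add_one_of_lt (by rw [Fin.lt_iff_val_lt_val, Fin.val_last]; omega)
    show (κ (p + 1) - 1)⁻¹ *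
        (∏ k ∈ Finset.univ.filter fun k : Fin (n + 1) => (k : ℕ) < ((p + 1 : Fin (n+1)) : ℕ),
          (κ k / (κ k - 1))) * (κ (p + 1) - 1)
      = (κ p - 1)⁻¹ *
        (∏ k ∈ Finset.univ.filter fun k : Fin (n + 1) => (k : ℕ) < (p : ℕ),
          (κ k / (κ k - 1))) * κ p
    simp only [hv]
    rw [filter_succ_eq, Finset.prod_insert (by simp)]
    set Pr := ∏ k ∈ Finset.univ.filter fun k : Fin (n + 1) => (k : ℕ) < (p : ℕ),
      (κ k / (κ k - 1)) with hPr
    have h1 : κ (p + 1) - 1 ≠ 0 := ne_of_gt (hκ1 _)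
    have h2 : κ p - 1 ≠ 0 := ne_of_gt (hκ1 _)
    field_simp
  have hlam0 : lam 0 = (κ 0 - 1)⁻¹ := by
    show (κ 0 - 1)⁻¹ *
        (∏ k ∈ Finset.univ.filter fun k : Fin (n + 1) => (k : ℕ) < ((0 : Fin (n+1)) : ℕ),
          (κ k / (κ k - 1))) = (κ 0 - 1)⁻¹
    rw [show (Finset.univ.filter fun k : Fin (n + 1) => (k : ℕ) < ((0 : Fin (n+1)) : ℕ)) =
      (∅ : Finset (Fin (n + 1))) from by simp]
    rw [Finset.prod_empty, mul_one]
  have hwrap : μ * lam 0 * (κ 0 - 1) = lam (Fin.last n) * κ (Fin.last n) := by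
    have hins : (Finset.univ : Finset (Fin (n + 1))) =
        insert (Fin.last n) (Finset.univ.filter fun k : Fin (n + 1) => (k : ℕ) < n) := by
      ext k
      have := k.isLt
      simp [Fin.ext_iff]
      omega
    have hμeq : μ = (κ (Fin.last n) / (κ (Fin.last n) - 1)) *
        ∏ k ∈ Finset.univ.filter (fun k : Fin (n + 1) => (k : ℕ) < n), (κ k / (κ k - 1)) := by
      rw [hμ]
      conv_lhs => rw [show (Finset.univ : Finset (Fin (n+1))) =
        insert (Fin.last n) (Finset.univ.filter fun k : Fin (n + 1) => (k : ℕ) < n) from hins]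
      rw [Finset.prod_insert (by simp)]
    have hlamlast : lam (Fin.last n) = (κ (Fin.last n) - 1)⁻¹ *
        ∏ k ∈ Finset.univ.filter (fun k : Fin (n + 1) => (k : ℕ) < n), (κ k / (κ k - 1)) := by
      show (κ (Fin.last n) - 1)⁻¹ *
        (∏ k ∈ Finset.univ.filter fun k : Fin (n + 1) => (k : ℕ) < ((Fin.last n : Fin (n+1)) : ℕ),
          (κ k / (κ k - 1))) = _
      simp only [Fin.val_last]
    rw [hlam0, hμeq, hlamlast]
    set Pr := ∏ k ∈ Finset.univ.filter (fun k : Fin (n + 1) => (k : ℕ) < n),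
      (κ k / (κ k - 1)) with hPr
    have h1 : κ (Fin.last n) - 1 ≠ 0 := ne_of_gt (hκ1 _)
    have h2 : κ 0 - 1 ≠ 0 := ne_of_gt (hκ1 _)
    field_simp
  refine ⟨μ, hμ1, lam, hlampos, ?_⟩
  intro i
  set c : Fin (n + 1) → ℝ := fun j => if (i : ℕ) < (j : ℕ) then lam j else μ * lam j with hc
  have step1 : ∑ j : Fin (n + 1), (if (i : ℕ) < (j : ℕ) then (X i - X j).det
      else if (j : ℕ) < (i : ℕ) then μ * (X i - X j).det else 0) * lam j
      = ∑ j : Fin (n + 1), c j * ((1 - κ j) * g i j + κ j * g i (j + 1)) := by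
    apply Finset.sum_congr rfl
    intro j _
    rcases lt_trichotomy (i : ℕ) (j : ℕ) with h | h | h
    · have e : c j = lam j := by simp only [hc]; rw [if_pos h]
      rw [if_pos h, e, ← hkey i j]; ring
    · have hji : j = i := Fin.ext h.symm
      subst hji
      rw [hgii j, hgsucc j]
      simp
    · have e : c j = μ * lam j := by simp only [hc]; rw [if_neg (by omega)]
      rw [if_neg (by omega), if_pos h, e, ← hkey i j]; ring
  have step2 : ∑ j : Fin (n + 1), c j * κ j * g i (j + 1)
      = ∑ j : Fin (n + 1), c (j - 1) * κ (j - 1) * g i j := by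
    apply Fintype.sum_bijective (· + (1 : Fin (n + 1))) (Equiv.addRight 1).bijective
    intro j
    rw [add_sub_cancel_right j 1]
  rw [step1]
  have step3 : ∑ j : Fin (n + 1), c j * ((1 - κ j) * g i j + κ j * g i (j + 1))
      = ∑ j : Fin (n + 1), (c j * (1 - κ j) + c (j - 1) * κ (j - 1)) * g i j := by
    rw [show (∑ j : Fin (n + 1), c j * ((1 - κ j) * g i j + κ j * g i (j + 1)))
      = (∑ j : Fin (n + 1), c j * (1 - κ j) * g i j) + ∑ j : Fin (n + 1), c j * κ j * g i (j + 1)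
      from by rw [← Finset.sum_add_distrib]; apply Finset.sum_congr rfl; intros; ring]
    rw [step2, ← Finset.sum_add_distrib]
    apply Finset.sum_congr rfl; intros; ring
  rw [step3]
  apply Finset.sum_eq_zero
  intro j _
  by_cases hji : j = i
  · subst hji; rw [hgii]; ring
  by_cases hji' : j - 1 = i
  · have : j = i + 1 := by rw [← hji', sub_add_cancel]
    rw [this, hgsucc]; ring
  · -- main case: coefficient vanishes
    have hijv : (i : ℕ) ≠ (j : ℕ) := fun hh => hji (Fin.ext hh.symm)
    have hcoeff : c j * (κ j - 1) = c (j - 1) * κ (j - 1) := by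
      set p := j - 1 with hp
      have hpj : p + 1 = j := sub_add_cancel j 1
      have hip : (i : ℕ) ≠ (p : ℕ) := fun hh => hji' (Fin.ext hh.symm)
      rcases lt_or_eq_of_le (Nat.lt_succ_iff.mp p.isLt) with h | h
      · -- no wrap
        have hv : ((p + 1 : Fin (n + 1)) : ℕ) = (p : ℕ) + 1 :=
          Fin.val_add_one_of_lt (by rwa [Fin.lt_iff_val_lt_val, Fin.val_last])
        have hjv : (j : ℕ) = (p : ℕ) + 1 := by rw [← hpj]; exact hv
        by_cases hlt : (i : ℕ) < (p : ℕ)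
        · have e1 : c j = lam j := by simp only [hc]; rw [if_pos (by omega)]
          have e2 : c p = lam p := by simp only [hc]; rw [if_pos hlt]
          rw [e1, e2, ← hpj]
          exact hrec p (by omega)
        · have e1 : c j = μ * lam j := by simp only [hc]; rw [if_neg (by omega)]
          have e2 : c p = μ * lam p := by simp only [hc]; rw [if_neg hlt]
          rw [e1, e2, ← hpj, mul_assoc, hrec p (by omega), ← mul_assoc]
      · -- wrap around
        have hplast : p = Fin.last n := Fin.ext (by simpa using h)
        have hj0 : j = 0 := by rw [← hpj, hplast, hlastadd]
        have hjv : (j : ℕ) = 0 := by rw [hj0]; rfl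
        have hilast : (i : ℕ) < n := by
          have h1 := i.isLt
          have h2 : (i : ℕ) ≠ n := fun hh => hip (by rw [hplast, Fin.val_last]; exact hh)
          omega
        have e1 : c j = μ * lam j := by simp only [hc]; rw [if_neg (by omega)]
        have e2 : c p = lam p := by
          simp only [hc]
          rw [if_pos (by rw [hplast, Fin.val_last]; exact hilast)]
        rw [e1, e2, hj0, hplast]
        exact hwrap
    have : c j * (1 - κ j) + c (j - 1) * κ (j - 1) = 0 := by linarith [hcoeff]
    rw [this]; ring
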